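/- If a sequent Γ ⇒ Δ is derivable in GKMALL, then the sequent [□̇/□]Γ ⇒ [□̇/□]Δ obtained by replacing every occurrence of the primitive modal operator □ by the Tarskian necessity □̇ is derivable in GMALL. -/

import Mathlib

/-- Formulas of MALL: atoms, constants 0, 1, ⊥, ⊤, negation, tensor ⊗,
par ⊕, additive conjunction ∧ and additive disjunction ∨. -/
inductive MF : Type
  | atom : Nat → MF
  | zero : MF
  | one : MF
  | bot : MF
  | top : MF
  | neg : MF → MF
  | tensor : MF → MF → MF
  | par : MF → MF → MF
  | conj : MF → MF → MF
  | disj : MF → MF → MF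

/-- Linear implication A ⊸ B := ¬A ⊕ B. -/
def MF.imp (A B : MF) : MF := MF.par (MF.neg A) B

/-- Tarskian possibility ◇A := ¬A ⊸ A. -/
def MF.diam (A : MF) : MF := MF.imp (MF.neg A) A

/-- Tarskian necessity □A := ¬◇¬A. -/
def MF.box (A : MF) : MF := MF.neg (MF.diam (MF.neg A))

/-- `Deriv W M C Γ Δ` : the sequent Γ ⇒ Δ (Γ, Δ finite multisets) is derivable
in GMALL extended by weakening (if `W`), mingle (if `M`), contraction (if `C`). -/
inductive Deriv (W M C : Prop) : Multiset MF → Multiset MF → Prop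
  | id (A : MF) : Deriv W M C {A} {A}
  | l0 : Deriv W M C {MF.zero} 0
  | r0 {Γ Δ} : Deriv W M C Γ Δ → Deriv W M C Γ (MF.zero ::ₘ Δ)
  | l1 {Γ Δ} : Deriv W M C Γ Δ → Deriv W M C (MF.one ::ₘ Γ) Δ
  | r1 : Deriv W M C 0 {MF.one}
  | lbot {Γ Δ} : Deriv W M C (MF.bot ::ₘ Γ) Δ
  | rtop {Γ Δ} : Deriv W M C Γ (MF.top ::ₘ Δ)
  | ltensor {A B Γ Δ} : Deriv W M C (A ::ₘ B ::ₘ Γ) Δ →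
      Deriv W M C (MF.tensor A B ::ₘ Γ) Δ
  | rtensor {A B Γ Γ' Δ Δ'} : Deriv W M C Γ (A ::ₘ Δ) → Deriv W M C Γ' (B ::ₘ Δ') →
      Deriv W M C (Γ + Γ') (MF.tensor A B ::ₘ (Δ + Δ'))
  | lpar {A B Γ Γ' Δ Δ'} : Deriv W M C (A ::ₘ Γ) Δ → Deriv W M C (B ::ₘ Γ') Δ' →
      Deriv W M C (MF.par A B ::ₘ (Γ + Γ')) (Δ + Δ')
  | rpar {A B Γ Δ} : Deriv W M C Γ (A ::ₘ B ::ₘ Δ) →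
      Deriv W M C Γ (MF.par A B ::ₘ Δ)
  | lconj1 {A B Γ Δ} : Deriv W M C (A ::ₘ Γ) Δ → Deriv W M C (MF.conj A B ::ₘ Γ) Δ
  | lconj2 {A B Γ Δ} : Deriv W M C (B ::ₘ Γ) Δ → Deriv W M C (MF.conj A B ::ₘ Γ) Δ
  | rconj {A B Γ Δ} : Deriv W M C Γ (A ::ₘ Δ) → Deriv W M C Γ (B ::ₘ Δ) →
      Deriv W M C Γ (MF.conj A B ::ₘ Δ)
  | ldisj {A B Γ Δ} : Deriv W M C (A ::ₘ Γ) Δ → Deriv W M C (B ::ₘ Γ) Δ →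
      Deriv W M C (MF.disj A B ::ₘ Γ) Δ
  | rdisj1 {A B Γ Δ} : Deriv W M C Γ (A ::ₘ Δ) → Deriv W M C Γ (MF.disj A B ::ₘ Δ)
  | rdisj2 {A B Γ Δ} : Deriv W M C Γ (B ::ₘ Δ) → Deriv W M C Γ (MF.disj A B ::ₘ Δ)
  | lneg {A Γ Δ} : Deriv W M C Γ (A ::ₘ Δ) → Deriv W M C (MF.neg A ::ₘ Γ) Δ
  | rneg {A Γ Δ} : Deriv W M C (A ::ₘ Γ) Δ → Deriv W M C Γ (MF.neg A ::ₘ Δ)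
  | limp {A B Γ Γ' Δ Δ'} : Deriv W M C Γ (A ::ₘ Δ) → Deriv W M C (B ::ₘ Γ') Δ' →
      Deriv W M C (MF.imp A B ::ₘ (Γ + Γ')) (Δ + Δ')
  | rimp {A B Γ Δ} : Deriv W M C (A ::ₘ Γ) (B ::ₘ Δ) →
      Deriv W M C Γ (MF.imp A B ::ₘ Δ)
  | lw {A Γ Δ} : W → Deriv W M C Γ Δ → Deriv W M C (A ::ₘ Γ) Δ
  | rw {A Γ Δ} : W → Deriv W M C Γ Δ → Deriv W M C Γ (A ::ₘ Δ)
  | mingle {Γ Γ' Δ Δ'} : M → Deriv W M C Γ Δ → Deriv W M C Γ' Δ' →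
      Deriv W M C (Γ + Γ') (Δ + Δ')
  | lc {A Γ Δ} : C → Deriv W M C (A ::ₘ A ::ₘ Γ) Δ → Deriv W M C (A ::ₘ Γ) Δ
  | rc {A Γ Δ} : C → Deriv W M C Γ (A ::ₘ A ::ₘ Δ) → Deriv W M C Γ (A ::ₘ Δ)

/-- GMALL : no extra structural rules. -/
def GMALL : Multiset MF → Multiset MF → Prop := Deriv False False False

/-- GMALL + the mingle rule M. -/
def GMALLM : Multiset MF → Multiset MF → Prop := Deriv False True False

/-- GAMALL : GMALL + weakening. -/
def GAMALL : Multiset MF → Multiset MF → Prop := Deriv True False False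

/-- GSLL : GMALL + contraction. -/
def GSLL : Multiset MF → Multiset MF → Prop := Deriv False False True

/-- Formulas of KMALL: MALL formulas with a primitive modal operator □. -/
inductive KF : Type
  | atom : Nat → KF
  | zero : KF
  | one : KF
  | bot : KF
  | top : KF
  | neg : KF → KF
  | tensor : KF → KF → KF
  | par : KF → KF → KF
  | conj : KF → KF → KF
  | disj : KF → KF → KF
  | box : KF → KF

/-- Linear implication A ⊸ B := ¬A ⊕ B. -/
def KF.imp (A B : KF) : KF := KF.par (KF.neg A) B

/-- GKMALL: GMALL on the extended language plus the rule K□: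
from Γ ⇒ A infer □Γ ⇒ □A. -/
inductive GKMALL : Multiset KF → Multiset KF → Prop
  | id (A : KF) : GKMALL {A} {A}
  | l0 : GKMALL {KF.zero} 0
  | r0 {Γ Δ} : GKMALL Γ Δ → GKMALL Γ (KF.zero ::ₘ Δ)
  | l1 {Γ Δ} : GKMALL Γ Δ → GKMALL (KF.one ::ₘ Γ) Δ
  | r1 : GKMALL 0 {KF.one}
  | lbot {Γ Δ} : GKMALL (KF.bot ::ₘ Γ) Δ
  | rtop {Γ Δ} : GKMALL Γ (KF.top ::ₘ Δ)
  | ltensor {A B Γ Δ} : GKMALL (A ::ₘ B ::ₘ Γ) Δ → GKMALL (KF.tensor A B ::ₘ Γ) Δ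
  | rtensor {A B Γ Γ' Δ Δ'} : GKMALL Γ (A ::ₘ Δ) → GKMALL Γ' (B ::ₘ Δ') →
      GKMALL (Γ + Γ') (KF.tensor A B ::ₘ (Δ + Δ'))
  | lpar {A B Γ Γ' Δ Δ'} : GKMALL (A ::ₘ Γ) Δ → GKMALL (B ::ₘ Γ') Δ' →
      GKMALL (KF.par A B ::ₘ (Γ + Γ')) (Δ + Δ')
  | rpar {A B Γ Δ} : GKMALL Γ (A ::ₘ B ::ₘ Δ) → GKMALL Γ (KF.par A B ::ₘ Δ)
  | lconj1 {A B Γ Δ} : GKMALL (A ::ₘ Γ) Δ → GKMALL (KF.conj A B ::ₘ Γ) Δ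
  | lconj2 {A B Γ Δ} : GKMALL (B ::ₘ Γ) Δ → GKMALL (KF.conj A B ::ₘ Γ) Δ
  | rconj {A B Γ Δ} : GKMALL Γ (A ::ₘ Δ) → GKMALL Γ (B ::ₘ Δ) →
      GKMALL Γ (KF.conj A B ::ₘ Δ)
  | ldisj {A B Γ Δ} : GKMALL (A ::ₘ Γ) Δ → GKMALL (B ::ₘ Γ) Δ →
      GKMALL (KF.disj A B ::ₘ Γ) Δ
  | rdisj1 {A B Γ Δ} : GKMALL Γ (A ::ₘ Δ) → GKMALL Γ (KF.disj A B ::ₘ Δ)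
  | rdisj2 {A B Γ Δ} : GKMALL Γ (B ::ₘ Δ) → GKMALL Γ (KF.disj A B ::ₘ Δ)
  | lneg {A Γ Δ} : GKMALL Γ (A ::ₘ Δ) → GKMALL (KF.neg A ::ₘ Γ) Δ
  | rneg {A Γ Δ} : GKMALL (A ::ₘ Γ) Δ → GKMALL Γ (KF.neg A ::ₘ Δ)
  | limp {A B Γ Γ' Δ Δ'} : GKMALL Γ (A ::ₘ Δ) → GKMALL (B ::ₘ Γ') Δ' →
      GKMALL (KF.imp A B ::ₘ (Γ + Γ')) (Δ + Δ')
  | rimp {A B Γ Δ} : GKMALL (A ::ₘ Γ) (B ::ₘ Δ) → GKMALL Γ (KF.imp A B ::ₘ Δ)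
  | kbox {Γ A} : GKMALL Γ {A} → GKMALL (Γ.map KF.box) {KF.box A}

/-- The substitution [□̇/□]: replace the primitive □ by the Tarskian necessity. -/
def KF.tr : KF → MF
  | KF.atom n => MF.atom n
  | KF.zero => MF.zero
  | KF.one => MF.one
  | KF.bot => MF.bot
  | KF.top => MF.top
  | KF.neg A => MF.neg A.tr
  | KF.tensor A B => MF.tensor A.tr B.tr
  | KF.par A B => MF.par A.tr B.tr
  | KF.conj A B => MF.conj A.tr B.tr
  | KF.disj A B => MF.disj A.tr B.tr
  | KF.box A => MF.box A.tr

lemma boxleft {a : MF} {Θ Δ : Multiset MF}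
    (h : Deriv False False False (a ::ₘ a ::ₘ Θ) Δ) :
    Deriv False False False (MF.box a ::ₘ Θ) Δ := by
  show Deriv False False False
    (MF.neg (MF.par (MF.neg (MF.neg (MF.neg a))) (MF.neg a)) ::ₘ Θ) Δ
  exact Deriv.lneg (Deriv.rpar (Deriv.rneg (Deriv.lneg (Deriv.rneg (Deriv.rneg h)))))

lemma contract_box : ∀ (Γ : Multiset MF) {S Δ : Multiset MF},
    Deriv False False False (Γ + Γ + S) Δ →
    Deriv False False False (Γ.map MF.box + S) Δ := by
  intro Γ
  induction Γ using Multiset.induction with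
  | empty => intro S Δ h; simpa using h
  | cons a Γ ih =>
    intro S Δ h
    rw [Multiset.map_cons, Multiset.cons_add]
    apply boxleft
    have e : a ::ₘ a ::ₘ (Multiset.map MF.box Γ + S)
        = Multiset.map MF.box Γ + (a ::ₘ a ::ₘ S) := by
      simp only [← Multiset.singleton_add]; abel
    rw [e]
    apply ih
    have e2 : Γ + Γ + (a ::ₘ a ::ₘ S) = (a ::ₘ Γ) + (a ::ₘ Γ) + S := by
      simp only [← Multiset.singleton_add]; abel
    rw [e2]; exact h

lemma boxK {Γ : Multiset MF} {A : MF} (h : Deriv False False False Γ {A}) :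
    Deriv False False False (Γ.map MF.box) {MF.box A} := by
  have h2 : Deriv False False False (Γ + Γ) {MF.box A} := by
    show Deriv False False False (Γ + Γ)
      {MF.neg (MF.par (MF.neg (MF.neg (MF.neg A))) (MF.neg A))}
    apply Deriv.rneg
    have p1 : Deriv False False False (MF.neg (MF.neg (MF.neg A)) ::ₘ Γ) 0 :=
      Deriv.lneg (Deriv.rneg (Deriv.lneg h))
    have p2 : Deriv False False False (MF.neg A ::ₘ Γ) 0 := Deriv.lneg h
    have := Deriv.lpar p1 p2
    simpa using this
  have := contract_box Γ (S := 0) (by simpa using h2)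
  simpa using this

/-- Every sequent derivable in GKMALL translates, replacing the primitive □ by
the Tarskian necessity, to a sequent derivable in GMALL. -/
theorem gkmall_to_gmall {Γ Δ : Multiset KF} (h : GKMALL Γ Δ) :
    GMALL (Γ.map KF.tr) (Δ.map KF.tr) := by
  induction h with
  | id A => simpa [GMALL, KF.tr] using Deriv.id A.tr
  | l0 => simpa [GMALL, KF.tr] using Deriv.l0
  | r0 _ ih => simpa [GMALL, KF.tr] using Deriv.r0 ih
  | l1 _ ih => simpa [GMALL, KF.tr] using Deriv.l1 ih
  | r1 => simpa [GMALL, KF.tr] using Deriv.r1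
  | lbot => simpa [GMALL, KF.tr] using Deriv.lbot
  | rtop => simpa [GMALL, KF.tr] using Deriv.rtop
  | ltensor _ ih => simp only [Multiset.map_cons] at *; exact Deriv.ltensor ih
  | rtensor _ _ ih1 ih2 =>
      simp only [Multiset.map_cons, Multiset.map_add] at *
      exact Deriv.rtensor ih1 ih2
  | lpar _ _ ih1 ih2 =>
      simp only [Multiset.map_cons, Multiset.map_add] at *
      exact Deriv.lpar ih1 ih2
  | rpar _ ih => simp only [Multiset.map_cons] at *; exact Deriv.rpar ih
  | lconj1 _ ih => simp only [Multiset.map_cons] at *; exact Deriv.lconj1 ih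
  | lconj2 _ ih => simp only [Multiset.map_cons] at *; exact Deriv.lconj2 ih
  | rconj _ _ ih1 ih2 =>
      simp only [Multiset.map_cons] at *; exact Deriv.rconj ih1 ih2
  | ldisj _ _ ih1 ih2 =>
      simp only [Multiset.map_cons] at *; exact Deriv.ldisj ih1 ih2
  | rdisj1 _ ih => simp only [Multiset.map_cons] at *; exact Deriv.rdisj1 ih
  | rdisj2 _ ih => simp only [Multiset.map_cons] at *; exact Deriv.rdisj2 ih
  | lneg _ ih => simp only [Multiset.map_cons] at *; exact Deriv.lneg ih
  | rneg _ ih => simp only [Multiset.map_cons] at *; exact Deriv.rneg ih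
  | limp _ _ ih1 ih2 =>
      simp only [Multiset.map_cons, Multiset.map_add, KF.imp, KF.tr] at *
      exact Deriv.limp ih1 ih2
  | rimp _ ih =>
      simp only [Multiset.map_cons, KF.imp, KF.tr] at *
      exact Deriv.rimp ih
  | kbox _ ih =>
      simp only [Multiset.map_map, Multiset.map_singleton] at *
      rw [show (KF.tr ∘ KF.box) = (MF.box ∘ KF.tr) from rfl]
      rw [← Multiset.map_map]
      exact boxK (by simpa [GMALL] using ih)
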